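/- arXiv:1506.01090 — 2 statements merged into one kernel-verified Lean document; each statement's English description precedes it below -/
import Mathlib

section
/- For every m > 0 there is a constant C such that for all v > 0, all unit vectors ν ∈ ℝ³, and all p ∈ ℝ³, one has |√((p + vν)² + m²) − (v + ν·p)| · (1 + |p|²)^{-1} ≤ C·(1/v). -/
open scoped RealInnerProductSpace

noncomputable section

abbrev E3 := EuclideanSpace ℝ (Fin 3)

lemma aux_real (m v t P : ℝ) (hm : 0 < m) (hv : 0 < v) (hP : 0 ≤ P)
    (ht : |t| ≤ P) :
    |Real.sqrt (P ^ 2 + 2 * v * t + v ^ 2 + m ^ 2) - (v + t)| * (1 + P ^ 2)⁻¹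
      ≤ (15 + m + m ^ 2) * (1 / v) := by
  set s : ℝ := v + t with hs
  set D : ℝ := P ^ 2 - t ^ 2 + m ^ 2 with hD
  have htP : t ^ 2 ≤ P ^ 2 := by
    have := abs_le.mp ht
    nlinarith [abs_nonneg t]
  have hD0 : m ^ 2 ≤ D := by simp only [hD]; nlinarith
  have harg : P ^ 2 + 2 * v * t + v ^ 2 + m ^ 2 = s ^ 2 + D := by ring
  rw [harg]
  set a : ℝ := Real.sqrt (s ^ 2 + D) with ha
  have ha0 : 0 ≤ a := Real.sqrt_nonneg _
  have ha2 : a ^ 2 = s ^ 2 + D := Real.sq_sqrt (by nlinarith)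
  have has : s ≤ a := by nlinarith
  rw [abs_of_nonneg (by linarith)]
  set C : ℝ := 15 + m + m ^ 2 with hC
  have key : (a - s) * v ≤ C * (1 + P ^ 2) := by
    rcases le_or_gt (-(v/2)) t with h | h
    · -- s ≥ v/2, so a + s ≥ v and (a-s)*v ≤ (a-s)*(a+s) = D
      have hsv : v ≤ 2 * s := by simp only [hs]; linarith
      have h1 : (a - s) * v ≤ (a - s) * (a + s) := by
        apply mul_le_mul_of_nonneg_left _ (by linarith)
        linarith
      have h2 : (a - s) * (a + s) = D := by nlinarith
      nlinarith
    · -- t < -v/2, so v ≤ 2P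
      have hvP : v ≤ 2 * P := by
        have : -t ≤ |t| := neg_le_abs t
        linarith
      have haub : a ≤ |s| + P + m := by
        have h1 : a ^ 2 ≤ (|s| + P + m) ^ 2 := by
          rw [ha2]
          nlinarith [sq_abs s, mul_nonneg (abs_nonneg s) (add_nonneg hP hm.le),
            mul_nonneg hP hm.le]
        nlinarith [abs_nonneg s]
      have hsub : |s| ≤ 3 * P := by
        have h1 : |s| ≤ v + |t| := by
          calc |s| = |v + t| := rfl
            _ ≤ |v| + |t| := abs_add_le _ _
            _ = v + |t| := by rw [abs_of_pos hv]
        linarith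
      have h2 : a - s ≤ 7 * P + m := by
        have : -s ≤ |s| := neg_le_abs s
        linarith
      have h3 : (a - s) * v ≤ (7 * P + m) * (2 * P) := by
        apply mul_le_mul h2 hvP (le_of_lt hv) (by positivity)
      nlinarith [sq_nonneg P, sq_nonneg (P - 1), mul_nonneg hm.le hP]
  have hden : (0:ℝ) < 1 + P ^ 2 := by positivity
  calc (a - s) * (1 + P ^ 2)⁻¹ = (a - s) / (1 + P ^ 2) := by
        rw [div_eq_mul_inv]
    _ ≤ C / v := by
        rw [div_le_div_iff₀ hden hv]
        linarith
    _ = C * (1 / v) := by ring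

/-- For every `m > 0` there is a constant `C` such that for all `v > 0`, unit vectors
`ν ∈ ℝ³` and all `p ∈ ℝ³`,
`|√((p + vν)² + m²) − (v + ν·p)| · (1 + |p|²)⁻¹ ≤ C · (1/v)`. -/
theorem stmt1 (m : ℝ) (hm : 0 < m) :
    ∃ C : ℝ, ∀ v : ℝ, 0 < v → ∀ ν : E3, ‖ν‖ = 1 → ∀ p : E3,
      |Real.sqrt (‖p + v • ν‖ ^ 2 + m ^ 2) - (v + ⟪ν, p⟫)| * (1 + ‖p‖ ^ 2)⁻¹
        ≤ C * (1 / v) := by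
  refine ⟨15 + m + m ^ 2, fun v hv ν hν p => ?_⟩
  have hnorm : ‖p + v • ν‖ ^ 2 = ‖p‖ ^ 2 + 2 * v * ⟪ν, p⟫ + v ^ 2 := by
    rw [@norm_add_sq_real, real_inner_smul_right, norm_smul, hν,
      real_inner_comm]
    simp [abs_of_pos hv]
    ring
  rw [hnorm]
  exact aux_real m v ⟪ν, p⟫ ‖p‖ hm hv (norm_nonneg p)
    (by simpa [hν] using abs_real_inner_le_norm ν p)
end
end

section
/- For every m > 0 there is a constant C such that for all v > 0, unit vectors ν ∈ ℝ³, t ∈ ℝ, and all φ in the Sobolev space H²(ℝ³), the L² norm of (e^{-it√((p+vν)²+m²)} − e^{-it(v+ν·p)})φ, where the operators are Fourier multipliers in p, is at most C·(|t|/v)·‖φ‖_{H²(ℝ³)}. -/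
open MeasureTheory
open scoped RealInnerProductSpace ENNReal

set_option maxHeartbeats 1000000

noncomputable section

lemma norm_exp_I_mul_sub_one_le (θ : ℝ) : ‖Complex.exp ((θ : ℂ) * Complex.I) - 1‖ ≤ |θ| := by
  have h : Complex.exp ((θ : ℂ) * Complex.I) - 1
      = ((Real.cos θ - 1 : ℝ) : ℂ) + ((Real.sin θ : ℝ) : ℂ) * Complex.I := by
    rw [Complex.exp_mul_I, ← Complex.ofReal_cos, ← Complex.ofReal_sin]
    push_cast
    ring
  have h2 : ‖Complex.exp ((θ : ℂ) * Complex.I) - 1‖ ^ 2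
      = (Real.cos θ - 1) ^ 2 + (Real.sin θ) ^ 2 := by
    rw [h, Complex.sq_norm, Complex.normSq_add_mul_I]
  have hc : 1 - θ ^ 2 / 2 ≤ Real.cos θ := Real.one_sub_sq_div_two_le_cos
  have hs : Real.sin θ ^ 2 + Real.cos θ ^ 2 = 1 := Real.sin_sq_add_cos_sq θ
  have hsq : ‖Complex.exp ((θ : ℂ) * Complex.I) - 1‖ ^ 2 ≤ θ ^ 2 := by
    rw [h2]; nlinarith [Real.cos_le_one θ]
  have h0 : (0:ℝ) ≤ ‖Complex.exp ((θ : ℂ) * Complex.I) - 1‖ := norm_nonneg _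
  nlinarith [abs_nonneg θ, sq_abs θ]

lemma norm_exp_sub_exp_le (t a b : ℝ) :
    ‖Complex.exp (-(Complex.I * (t : ℂ) * (a : ℂ))) -
      Complex.exp (-(Complex.I * (t : ℂ) * (b : ℂ)))‖ ≤ |t| * |a - b| := by
  have hfac : Complex.exp (-(Complex.I * (t : ℂ) * (a : ℂ))) -
      Complex.exp (-(Complex.I * (t : ℂ) * (b : ℂ)))
      = Complex.exp (-(Complex.I * (t : ℂ) * (b : ℂ))) *
        (Complex.exp (((t * (b - a) : ℝ) : ℂ) * Complex.I) - 1) := by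
    rw [mul_sub, mul_one, ← Complex.exp_add]
    congr 1
    push_cast
    ring
  rw [hfac, norm_mul]
  have h1 : ‖Complex.exp (-(Complex.I * (t : ℂ) * (b : ℂ)))‖ = 1 := by
    rw [Complex.norm_exp]
    simp [Complex.exp_re]
  rw [h1, one_mul]
  calc ‖Complex.exp (((t * (b - a) : ℝ) : ℂ) * Complex.I) - 1‖ ≤ |t * (b - a)| :=
        norm_exp_I_mul_sub_one_le _
    _ = |t| * |a - b| := by rw [abs_mul, abs_sub_comm]

lemma symbol_bound (m : ℝ) (hm : 0 < m) (v : ℝ) (hv : 0 < v) (ν : E3) (hν : ‖ν‖ = 1)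
    (ξ : E3) :
    |Real.sqrt (‖ξ + v • ν‖ ^ 2 + m ^ 2) - (v + ⟪ν, ξ⟫)| ≤
      (14 + 2 * m + 2 * m ^ 2) * ((1 + ‖ξ‖ ^ 2) / v) := by
  set A := Real.sqrt (‖ξ + v • ν‖ ^ 2 + m ^ 2) with hA
  set B := v + ⟪ν, ξ⟫ with hB
  have hA0 : 0 ≤ A := Real.sqrt_nonneg _
  have hAsq : A ^ 2 = ‖ξ + v • ν‖ ^ 2 + m ^ 2 := by
    rw [hA, Real.sq_sqrt]; positivity
  have hnormsq : ‖ξ + v • ν‖ ^ 2 = ‖ξ‖ ^ 2 + 2 * v * ⟪ν, ξ⟫ + v ^ 2 := by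
    rw [norm_add_sq_real, real_inner_smul_right, norm_smul, real_inner_comm]
    rw [Real.norm_eq_abs, abs_of_pos hv, hν]
    ring
  have hCS : |⟪ν, ξ⟫| ≤ ‖ξ‖ := by
    have := abs_real_inner_le_norm ν ξ
    rwa [hν, one_mul] at this
  have hAB : |B| ≤ A := by
    have h1 : B ^ 2 ≤ A ^ 2 := by
      rw [hAsq, hnormsq, hB]
      nlinarith [sq_abs ⟪ν, ξ⟫, mul_le_mul hCS hCS (abs_nonneg _) (norm_nonneg _), sq_nonneg m]
    nlinarith [abs_nonneg B, sq_abs B]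
  have hABle : B ≤ A := (le_abs_self B).trans hAB
  rw [abs_of_nonneg (by linarith : (0:ℝ) ≤ A - B)]
  rw [← mul_div_assoc, le_div_iff₀ hv]
  -- goal : (A - B) * v ≤ (14 + 2m + 2m²) * (1 + ‖ξ‖²)
  by_cases hcase : v / 2 ≤ B
  · -- B ≥ v/2 > 0 : rationalize
    have hB0 : 0 < B := lt_of_lt_of_le (by linarith) hcase
    have hdiff : (A - B) * (A + B) = ‖ξ‖ ^ 2 - ⟪ν, ξ⟫ ^ 2 + m ^ 2 := by
      have : A ^ 2 - B ^ 2 = ‖ξ‖ ^ 2 - ⟪ν, ξ⟫ ^ 2 + m ^ 2 := by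
        rw [hAsq, hnormsq, hB]; ring
      nlinarith [this]
    nlinarith [hdiff, sq_nonneg ⟪ν, ξ⟫, sq_nonneg m, sq_nonneg (‖ξ‖),
      mul_nonneg (sq_nonneg m) (sq_nonneg (‖ξ‖)),
      mul_le_mul_of_nonneg_left (show v ≤ A + B by linarith) (show (0:ℝ) ≤ A - B by linarith)]
  · -- B < v/2, i.e. ⟪ν,ξ⟫ < -v/2, so ‖ξ‖ > v/2
    push_neg at hcase
    have hcase' : ⟪ν, ξ⟫ < -(v/2) := by
      have := hcase; rw [hB] at this; linarith
    have hxi : v / 2 ≤ ‖ξ‖ := by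
      have h1 : -|⟪ν, ξ⟫| ≤ ⟪ν, ξ⟫ := neg_abs_le _
      linarith [hCS]
    have hAup : A ≤ ‖ξ‖ + v + m := by
      rw [hA]
      have h1 : ‖ξ + v • ν‖ ^ 2 + m ^ 2 ≤ (‖ξ‖ + v + m) ^ 2 := by
        have hn : ‖ξ + v • ν‖ ≤ ‖ξ‖ + v := by
          calc ‖ξ + v • ν‖ ≤ ‖ξ‖ + ‖v • ν‖ := norm_add_le _ _
            _ = ‖ξ‖ + v := by rw [norm_smul, Real.norm_eq_abs, abs_of_pos hv, hν, mul_one]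
        nlinarith [norm_nonneg (ξ + v • ν), norm_nonneg ξ, hm.le, hv.le]
      calc Real.sqrt (‖ξ + v • ν‖ ^ 2 + m ^ 2) ≤ Real.sqrt ((‖ξ‖ + v + m) ^ 2) :=
            Real.sqrt_le_sqrt h1
        _ = ‖ξ‖ + v + m := by
            rw [Real.sqrt_sq (by positivity)]
    have hBlow : -(v + ‖ξ‖) ≤ B := by
      rw [hB]; nlinarith [neg_abs_le ⟪ν, ξ⟫, hCS]
    -- A - B ≤ 2‖ξ‖ + 2v + m,  v ≤ 2‖ξ‖
    have hv2 : v ≤ 2 * ‖ξ‖ := by linarith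
    have e1 : (A - B) * v ≤ (2*‖ξ‖ + 2*v + m) * v :=
      mul_le_mul_of_nonneg_right (by linarith) hv.le
    have e3 : ‖ξ‖ * v ≤ ‖ξ‖ * (2*‖ξ‖) := mul_le_mul_of_nonneg_left hv2 (norm_nonneg ξ)
    have e4 : v * v ≤ (2*‖ξ‖) * (2*‖ξ‖) :=
      mul_le_mul hv2 hv2 hv.le (by positivity)
    have e5 : m * v ≤ m * (2*‖ξ‖) := mul_le_mul_of_nonneg_left hv2 hm.le
    have e6 : m * (2*‖ξ‖) ≤ m * (1 + ‖ξ‖^2) :=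
      mul_le_mul_of_nonneg_left (by have := sq_nonneg (‖ξ‖ - 1); linarith [this, sq_abs ‖ξ‖]) hm.le
    nlinarith [e1, e3, e4, e5, e6, sq_nonneg m, mul_nonneg (sq_nonneg m) (sq_nonneg ‖ξ‖)]


/-- For every `m > 0` there is a constant `C` such that for all `v > 0`, unit vectors `ν`,
`t ∈ ℝ` and all `φ ∈ H²(ℝ³)`, the `L²` norm of
`(e^{-it√((p+vν)²+m²)} − e^{-it(v+ν·p)})φ` is at most `C·(|t|/v)·‖φ‖_{H²}`.

Since both operators are Fourier multipliers, by Plancherel this is equivalently stated on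
the Fourier-transform side: `φ` below plays the role of the Fourier transform `φ̂`, the
operators act by multiplication by their symbols, and
`‖φ‖_{H²} = ‖⟨ξ⟩² φ̂‖_{L²}` with `⟨ξ⟩² = 1 + |ξ|²`. -/
theorem stmt2 (m : ℝ) (hm : 0 < m) :
    ∃ C : ℝ, ∀ v : ℝ, 0 < v → ∀ ν : E3, ‖ν‖ = 1 → ∀ t : ℝ, ∀ φ : E3 → ℂ,
      eLpNorm
        (fun ξ : E3 =>
          (Complex.exp (-(Complex.I * (t : ℂ) * (Real.sqrt (‖ξ + v • ν‖ ^ 2 + m ^ 2) : ℂ)))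
            - Complex.exp (-(Complex.I * (t : ℂ) * ((v + ⟪ν, ξ⟫ : ℝ) : ℂ)))) * φ ξ) 2 volume
        ≤ ENNReal.ofReal (C * (|t| / v)) *
          eLpNorm (fun ξ : E3 => ((1 + ‖ξ‖ ^ 2 : ℝ) : ℂ) * φ ξ) 2 volume := by
  refine ⟨14 + 2 * m + 2 * m ^ 2, fun v hv ν hν t φ => ?_⟩
  set C₀ : ℝ := 14 + 2 * m + 2 * m ^ 2 with hC₀
  have hC₀pos : 0 < C₀ := by positivity
  set c : NNReal := (C₀ * (|t| / v)).toNNReal with hc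
  have hbound : ∀ ξ : E3,
      ‖(Complex.exp (-(Complex.I * (t : ℂ) * (Real.sqrt (‖ξ + v • ν‖ ^ 2 + m ^ 2) : ℂ)))
          - Complex.exp (-(Complex.I * (t : ℂ) * ((v + ⟪ν, ξ⟫ : ℝ) : ℂ)))) * φ ξ‖
        ≤ (c : ℝ) * ‖((1 + ‖ξ‖ ^ 2 : ℝ) : ℂ) * φ ξ‖ := by
    intro ξ
    rw [norm_mul, norm_mul]
    have h1 : ‖Complex.exp (-(Complex.I * (t : ℂ) * (Real.sqrt (‖ξ + v • ν‖ ^ 2 + m ^ 2) : ℂ)))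
        - Complex.exp (-(Complex.I * (t : ℂ) * ((v + ⟪ν, ξ⟫ : ℝ) : ℂ)))‖
        ≤ |t| * |Real.sqrt (‖ξ + v • ν‖ ^ 2 + m ^ 2) - (v + ⟪ν, ξ⟫)| :=
      norm_exp_sub_exp_le t _ _
    have h2 := symbol_bound m hm v hv ν hν ξ
    have h3 : ‖((1 + ‖ξ‖ ^ 2 : ℝ) : ℂ)‖ = 1 + ‖ξ‖ ^ 2 := by
      rw [Complex.norm_real, Real.norm_eq_abs, abs_of_pos (by positivity)]
    rw [h3]
    have hcval : (c : ℝ) = C₀ * (|t| / v) := by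
      rw [hc, Real.coe_toNNReal]
      positivity
    rw [hcval]
    have key : ‖Complex.exp (-(Complex.I * (t : ℂ) * (Real.sqrt (‖ξ + v • ν‖ ^ 2 + m ^ 2) : ℂ)))
        - Complex.exp (-(Complex.I * (t : ℂ) * ((v + ⟪ν, ξ⟫ : ℝ) : ℂ)))‖
        ≤ C₀ * (|t| / v) * (1 + ‖ξ‖ ^ 2) := by
      calc _ ≤ |t| * |Real.sqrt (‖ξ + v • ν‖ ^ 2 + m ^ 2) - (v + ⟪ν, ξ⟫)| := h1
        _ ≤ |t| * (C₀ * ((1 + ‖ξ‖ ^ 2) / v)) := by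
            exact mul_le_mul_of_nonneg_left h2 (abs_nonneg t)
        _ = C₀ * (|t| / v) * (1 + ‖ξ‖ ^ 2) := by field_simp
    calc _ ≤ (C₀ * (|t| / v) * (1 + ‖ξ‖ ^ 2)) * ‖φ ξ‖ :=
          mul_le_mul_of_nonneg_right key (norm_nonneg _)
      _ = C₀ * (|t| / v) * ((1 + ‖ξ‖ ^ 2) * ‖φ ξ‖) := by ring
  have := eLpNorm_le_nnreal_smul_eLpNorm_of_ae_le_mul
    (Filter.Eventually.of_forall hbound) 2 (μ := volume)
  refine le_trans this ?_
  rw [ENNReal.smul_def, smul_eq_mul]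
  gcongr
  rw [hc, ENNReal.ofReal]
end
end
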